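/- arXiv:1402.3402 — 3 statements merged into one kernel-verified Lean document; each statement's English description precedes it below -/
import Mathlib

section
/- Let A, A_1, …, A_M be real n×n matrices and B a real n×m matrix. On a probability space, let (σ_k(i))_{0≤k<N, 1≤i≤M} be real random variables, (w_k)_{0≤k<N} be ℝ^n-valued random vectors, and (u_k)_{0≤k<N}, (v_k)_{0≤k<N} be ℝ^m-valued random vectors, all with finite second moments. Define x'_0 = 0, x''_0 = 0, x'_{k+1} = (A + Σ_{i=1}^M σ_k(i) A_i) x'_k + B u_k + w_k, and x''_{k+1} = (A + Σ_{i=1}^M σ_k(i) A_i) x''_k + B v_k. Assume that for every k, the random vector v_k has mean zero and is independent of the joint family of random variables (σ_l(i), w_l, u_l : 0 ≤ l < N, 1 ≤ i ≤ M), and that the v_k have finite second moments. Then for every k ≤ N, E[x''_k (x'_k)ᵀ] = 0 and, for every k < N, E[u_k (x''_k)ᵀ] = 0. -/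
open MeasureTheory Matrix Filter

/-- `E[a bᵀ]`: the `d × e` matrix of second moments of two random vectors. -/
noncomputable def crossMoment {Ω : Type*} [MeasurableSpace Ω] (μ : Measure Ω)
    {d e : ℕ} (a : Ω → Fin d → ℝ) (b : Ω → Fin e → ℝ) : Matrix (Fin d) (Fin e) ℝ :=
  Matrix.of fun i j => ∫ ω, a ω i * b ω j ∂μ

open ProbabilityTheory in
private lemma key_zero {Ω E : Type*} [MeasurableSpace Ω] [MeasurableSpace E]
    (μ : Measure Ω) [IsProbabilityMeasure μ]
    {ι : Type*} [Fintype ι] (Z : Ω → E) (hZ : AEMeasurable Z μ)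
    (f : ι → E → ℝ) (hf : ∀ t, Measurable (f t))
    (g : ι → Ω → ℝ) (hg : ∀ t, Integrable (g t) μ)
    (hgmean : ∀ t, ∫ ω, g t ω ∂μ = 0)
    (hind : ∀ t, IndepFun (g t) Z μ) :
    ∫ ω, ∑ t, f t (Z ω) * g t ω ∂μ = 0 := by
  classical
  by_cases hY : Integrable (fun ω => ∑ t, f t (Z ω) * g t ω) μ
  · have hGmeas : Measurable (fun e => ∑ t, |f t e|) :=
      Finset.measurable_sum _ fun t _ => (hf t).abs
    set χ : ℕ → E → ℝ := fun R e => if ∑ t, |f t e| ≤ (R : ℝ) then 1 else 0 with hχdef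
    have hχmeas : ∀ R, Measurable (χ R) := fun R =>
      Measurable.ite (measurableSet_le hGmeas measurable_const) measurable_const measurable_const
    have hχ01 : ∀ R e, χ R e = 0 ∨ χ R e = 1 := by
      intro R e
      by_cases h : ∑ t, |f t e| ≤ (R : ℝ) <;> simp [hχdef, h]
    have hterm_int : ∀ (R : ℕ) (t : ι),
        Integrable (fun ω => (f t (Z ω) * χ R (Z ω)) * g t ω) μ := by
      intro R t
      refine (hg t).bdd_mul
        ((((hf t).mul (hχmeas R)).comp_aemeasurable hZ).aestronglyMeasurable) (c := R) (Filter.Eventually.of_forall fun ω => ?_)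
      by_cases h : ∑ t', |f t' (Z ω)| ≤ (R : ℝ)
      · have h1 : |f t (Z ω)| ≤ ∑ t', |f t' (Z ω)| :=
          Finset.single_le_sum (f := fun t' => |f t' (Z ω)|) (fun _ _ => abs_nonneg _)
            (Finset.mem_univ t)
        simp only [hχdef, if_pos h, mul_one, Real.norm_eq_abs]
        exact le_trans h1 h
      · simp only [hχdef, if_neg h, mul_zero, norm_zero]
        positivity
    have hzeroR : ∀ R : ℕ,
        ∫ ω, (∑ t, f t (Z ω) * g t ω) * χ R (Z ω) ∂μ = 0 := by
      intro R
      have hrw : ∀ ω, (∑ t, f t (Z ω) * g t ω) * χ R (Z ω)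
          = ∑ t, (f t (Z ω) * χ R (Z ω)) * g t ω := by
        intro ω
        rw [Finset.sum_mul]
        exact Finset.sum_congr rfl fun t _ => by ring
      simp_rw [hrw]
      rw [integral_finset_sum _ fun t _ => hterm_int R t]
      refine Finset.sum_eq_zero fun t _ => ?_
      have hFt : IndepFun (fun ω => f t (Z ω) * χ R (Z ω)) (g t) μ :=
        ((hind t).comp measurable_id ((hf t).mul (hχmeas R))).symm
      have hFint : Integrable (fun ω => f t (Z ω) * χ R (Z ω)) μ := by
        refine ⟨(((hf t).mul (hχmeas R)).comp_aemeasurable hZ).aestronglyMeasurable, ?_⟩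
        refine HasFiniteIntegral.of_bounded (C := R) (Filter.Eventually.of_forall fun ω => ?_)
        by_cases h : ∑ t', |f t' (Z ω)| ≤ (R : ℝ)
        · have h1 : |f t (Z ω)| ≤ ∑ t', |f t' (Z ω)| :=
            Finset.single_le_sum (f := fun t' => |f t' (Z ω)|) (fun _ _ => abs_nonneg _)
              (Finset.mem_univ t)
          simp only [hχdef, if_pos h, mul_one, Real.norm_eq_abs]
          exact le_trans h1 h
        · simp only [hχdef, if_neg h, mul_zero, norm_zero]
          positivity
      have hgoal : ∫ ω, (f t (Z ω) * χ R (Z ω)) * g t ω ∂μ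
          = (∫ ω, f t (Z ω) * χ R (Z ω) ∂μ) * ∫ ω, g t ω ∂μ :=
        hFt.integral_fun_mul_eq_mul_integral hFint.1 (hg t).1
      rw [hgoal, hgmean t, mul_zero]
    have hlim : Tendsto (fun R : ℕ => ∫ ω, (∑ t, f t (Z ω) * g t ω) * χ R (Z ω) ∂μ)
        atTop (nhds (∫ ω, ∑ t, f t (Z ω) * g t ω ∂μ)) := by
      refine tendsto_integral_of_dominated_convergence
        (fun ω => |∑ t, f t (Z ω) * g t ω|) (fun R => ?_) ?_ ?_ ?_
      · exact hY.aestronglyMeasurable.mul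
          (((hχmeas R).comp_aemeasurable hZ).aestronglyMeasurable)
      · exact hY.abs
      · intro R
        refine Filter.Eventually.of_forall fun ω => ?_
        rcases hχ01 R (Z ω) with h | h <;>
          simp [h, Real.norm_eq_abs, abs_mul, abs_nonneg]
      · refine Filter.Eventually.of_forall fun ω => ?_
        refine Tendsto.congr' ?_ tendsto_const_nhds
        filter_upwards [eventually_ge_atTop ⌈∑ t, |f t (Z ω)|⌉₊] with R hR
        have hle : ∑ t, |f t (Z ω)| ≤ (R : ℝ) :=
          le_trans (Nat.le_ceil _) (by exact_mod_cast hR)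
        simp [hχdef, hle]
    have hconst : (fun R : ℕ => ∫ ω, (∑ t, f t (Z ω) * g t ω) * χ R (Z ω) ∂μ)
        = fun _ => (0 : ℝ) := funext hzeroR
    rw [hconst] at hlim
    exact tendsto_nhds_unique hlim tendsto_const_nhds
  · exact integral_undef hY

theorem decomposition_uncorrelated
    {Ω : Type*} [MeasurableSpace Ω] (μ : Measure Ω) [IsProbabilityMeasure μ]
    {n m M N : ℕ}
    (A : Matrix (Fin n) (Fin n) ℝ) (Ai : Fin M → Matrix (Fin n) (Fin n) ℝ)
    (B : Matrix (Fin n) (Fin m) ℝ)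
    (σ : ℕ → Fin M → Ω → ℝ) (w : ℕ → Ω → Fin n → ℝ)
    (u v : ℕ → Ω → Fin m → ℝ)
    (x' x'' : ℕ → Ω → Fin n → ℝ)
    (hσ : ∀ k < N, ∀ i, MemLp (σ k i) 2 μ)
    (hw : ∀ k < N, MemLp (w k) 2 μ)
    (hu : ∀ k < N, MemLp (u k) 2 μ)
    (hv : ∀ k < N, MemLp (v k) 2 μ)
    (hx'0 : x' 0 = 0) (hx''0 : x'' 0 = 0)
    (hx' : ∀ k < N, ∀ ω, x' (k + 1) ω =
      (A + ∑ i, σ k i ω • Ai i).mulVec (x' k ω) + B.mulVec (u k ω) + w k ω)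
    (hx'' : ∀ k < N, ∀ ω, x'' (k + 1) ω =
      (A + ∑ i, σ k i ω • Ai i).mulVec (x'' k ω) + B.mulVec (v k ω))
    (hvmean : ∀ k < N, ∫ ω, v k ω ∂μ = 0)
    (hvindep : ∀ k < N, ProbabilityTheory.IndepFun (v k)
      (fun ω => (fun (l : Fin N) (i : Fin M) => σ l i ω,
                 fun l : Fin N => w l ω,
                 fun l : Fin N => u l ω)) μ) :
    (∀ k ≤ N, crossMoment μ (x'' k) (x' k) = 0) ∧
    (∀ k < N, crossMoment μ (u k) (x'' k) = 0) := by
  classical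
  set Z : Ω → ((Fin N → Fin M → ℝ) × (Fin N → Fin n → ℝ) × (Fin N → Fin m → ℝ)) :=
    fun ω => (fun (l : Fin N) (i : Fin M) => σ l i ω,
              fun l : Fin N => w l ω, fun l : Fin N => u l ω) with hZdef
  have hvindepZ : ∀ k, k < N → ProbabilityTheory.IndepFun (v k) Z μ := by
    intro k hk
    rw [hZdef]
    exact hvindep k hk
  have hσae : ∀ (l : Fin N) (i : Fin M), AEMeasurable (σ l i) μ :=
    fun l i => (hσ l l.2 i).1.aemeasurable
  have hwae : ∀ l : Fin N, AEMeasurable (w l) μ := fun l => (hw l l.2).1.aemeasurable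
  have huae : ∀ l : Fin N, AEMeasurable (u l) μ := fun l => (hu l l.2).1.aemeasurable
  have hZae : AEMeasurable Z μ := by
    refine ⟨fun ω => (fun l i => (hσae l i).mk _ ω,
      fun l => (hwae l).mk _ ω, fun l => (huae l).mk _ ω), ?_, ?_⟩
    · exact (measurable_pi_lambda _ fun l => measurable_pi_lambda _ fun i =>
          (hσae l i).measurable_mk).prodMk
        ((measurable_pi_lambda _ fun l => (hwae l).measurable_mk).prodMk
          (measurable_pi_lambda _ fun l => (huae l).measurable_mk))
    · have h1 : ∀ᵐ ω ∂μ, ∀ (l : Fin N) (i : Fin M), σ l i ω = (hσae l i).mk _ ω := by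
        rw [MeasureTheory.ae_all_iff]
        intro l
        rw [MeasureTheory.ae_all_iff]
        exact fun i => (hσae l i).ae_eq_mk
      have h2 : ∀ᵐ ω ∂μ, ∀ l : Fin N, w l ω = (hwae l).mk _ ω := by
        rw [MeasureTheory.ae_all_iff]
        exact fun l => (hwae l).ae_eq_mk
      have h3 : ∀ᵐ ω ∂μ, ∀ l : Fin N, u l ω = (huae l).mk _ ω := by
        rw [MeasureTheory.ae_all_iff]
        exact fun l => (huae l).ae_eq_mk
      filter_upwards [h1, h2, h3] with ω e1 e2 e3
      rw [hZdef]
      refine Prod.ext ?_ (Prod.ext ?_ ?_)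
      · exact funext fun l => funext fun i => e1 l i
      · exact funext fun l => e2 l
      · exact funext fun l => e3 l
  -- coordinates of v are integrable, mean zero, independent of Z
  have hvint : ∀ l, l < N → Integrable (v l) μ := fun l hl =>
    memLp_one_iff_integrable.1 ((hv l hl).mono_exponent one_le_two)
  have hgint : ∀ l, l < N → ∀ j' : Fin m, Integrable (fun ω => v l ω j') μ := by
    intro l hl j'
    exact (ContinuousLinearMap.proj (R := ℝ) (φ := fun _ : Fin m => ℝ) j').integrable_comp
      (hvint l hl)
  have hgmean' : ∀ l, l < N → ∀ j' : Fin m, ∫ ω, v l ω j' ∂μ = 0 := by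
    intro l hl j'
    have h := (ContinuousLinearMap.proj (R := ℝ) (φ := fun _ : Fin m => ℝ) j').integral_comp_comm
      (hvint l hl)
    simpa [hvmean l hl] using h
  have hgind : ∀ l, l < N → ∀ j' : Fin m,
      ProbabilityTheory.IndepFun (fun ω => v l ω j') Z μ := by
    intro l hl j'
    exact (hvindepZ l hl).comp (measurable_pi_apply j') measurable_id
  -- representation of x' as a measurable function of Z
  have hx'rep : ∀ k, k ≤ N →
      ∃ ξ : ((Fin N → Fin M → ℝ) × (Fin N → Fin n → ℝ) × (Fin N → Fin m → ℝ)) → Fin n → ℝ,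
        (∀ j, Measurable fun e => ξ e j) ∧ ∀ ω, x' k ω = ξ (Z ω) := by
    intro k
    induction k with
    | zero =>
      exact fun _ => ⟨fun _ _ => 0, fun j => measurable_const, fun ω => by rw [hx'0]; rfl⟩
    | succ k ih =>
      intro hk
      have hkN : k < N := hk
      obtain ⟨ξ, hξm, hξ⟩ := ih (Nat.le_of_succ_le hk)
      refine ⟨fun e => (A + ∑ i, e.1 ⟨k, hkN⟩ i • Ai i).mulVec (ξ e)
          + B.mulVec (e.2.2 ⟨k, hkN⟩) + e.2.1 ⟨k, hkN⟩, fun j => ?_, fun ω => ?_⟩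
      · simp only [Pi.add_apply]
        refine (Measurable.add (Measurable.add ?_ ?_) ?_)
        · simp only [Matrix.mulVec, dotProduct, Matrix.add_apply, Matrix.sum_apply,
            Matrix.smul_apply, smul_eq_mul]
          refine Finset.measurable_sum _ fun j' _ => Measurable.mul ?_ (hξm j')
          exact measurable_const.add (Finset.measurable_sum _ fun i _ =>
            (measurable_fst.eval.eval).fun_mul measurable_const)
        · simp only [Matrix.mulVec, dotProduct]
          exact Finset.measurable_sum _ fun j' _ =>
            measurable_const.mul (measurable_snd.snd.eval.eval)
        · exact measurable_snd.fst.eval.eval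
      · rw [hx' k hkN ω, hξ ω]
  -- representation of x'' as a v-linear combination with Z-measurable coefficients
  have hx''rep : ∀ k, k ≤ N →
      ∃ φ : ℕ → ((Fin N → Fin M → ℝ) × (Fin N → Fin n → ℝ) × (Fin N → Fin m → ℝ)) →
          Matrix (Fin n) (Fin m) ℝ,
        (∀ l i j, Measurable fun e => φ l e i j) ∧
        ∀ ω, x'' k ω = ∑ l ∈ Finset.range k, (φ l (Z ω)).mulVec (v l ω) := by
    intro k
    induction k with
    | zero =>
      exact fun _ => ⟨fun _ _ => 0, fun _ _ _ => measurable_const, fun ω => by rw [hx''0]; simp⟩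
    | succ k ih =>
      intro hk
      have hkN : k < N := hk
      obtain ⟨φ, hφm, hφ⟩ := ih (Nat.le_of_succ_le hk)
      refine ⟨fun l e => if l = k then B else (A + ∑ i, e.1 ⟨k, hkN⟩ i • Ai i) * φ l e,
        fun l i j => ?_, fun ω => ?_⟩
      · by_cases h : l = k
        · simp only [h, if_pos rfl]
          exact measurable_const
        · simp only [if_neg h, Matrix.mul_apply, Matrix.add_apply, Matrix.sum_apply,
            Matrix.smul_apply, smul_eq_mul]
          refine Finset.measurable_sum _ fun t _ => Measurable.mul ?_ (hφm l t j)
          exact measurable_const.add (Finset.measurable_sum _ fun i' _ =>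
            (measurable_fst.eval.eval).fun_mul measurable_const)
      · rw [hx'' k hkN ω, hφ ω, Finset.sum_range_succ]
        have hlin : (A + ∑ i, σ k i ω • Ai i).mulVec
            (∑ l ∈ Finset.range k, (φ l (Z ω)).mulVec (v l ω))
            = ∑ l ∈ Finset.range k,
                ((A + ∑ i, σ k i ω • Ai i) * φ l (Z ω)).mulVec (v l ω) := by
          rw [← Matrix.mulVecLin_apply, map_sum]
          refine Finset.sum_congr rfl fun l _ => ?_
          rw [Matrix.mulVecLin_apply, Matrix.mulVec_mulVec]
        rw [hlin]
        congr 1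
        · refine Finset.sum_congr rfl fun l hl => ?_
          have hlk : l ≠ k := Nat.ne_of_lt (Finset.mem_range.1 hl)
          simp only [if_neg hlk]
          rfl
        · simp
  refine ⟨fun k hk => ?_, fun k hk => ?_⟩
  · obtain ⟨φ, hφm, hφ⟩ := hx''rep k hk
    obtain ⟨ξ, hξm, hξ⟩ := hx'rep k hk
    ext i j
    simp only [crossMoment, Matrix.of_apply, Matrix.zero_apply]
    have hrep : ∀ ω, x'' k ω i * x' k ω j
        = ∑ t : Fin k × Fin m, (φ (↑t.1) (Z ω) i t.2 * ξ (Z ω) j) * v (↑t.1) ω t.2 := by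
      intro ω
      rw [hφ ω, hξ ω, Fintype.sum_prod_type, Finset.sum_apply,
        ← Fin.sum_univ_eq_sum_range (fun l => (φ l (Z ω)).mulVec (v l ω) i) k,
        Finset.sum_mul]
      refine Finset.sum_congr rfl fun l _ => ?_
      simp only [Matrix.mulVec, dotProduct, Finset.sum_mul]
      refine Finset.sum_congr rfl fun j' _ => ?_
      ring
    calc ∫ ω, x'' k ω i * x' k ω j ∂μ
        = ∫ ω, ∑ t : Fin k × Fin m,
            (fun (t : Fin k × Fin m) e => φ (↑t.1) e i t.2 * ξ e j) t (Z ω)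
              * (fun (t : Fin k × Fin m) ω => v (↑t.1) ω t.2) t ω ∂μ :=
          integral_congr_ae (Filter.Eventually.of_forall fun ω => by simpa using hrep ω)
      _ = 0 := key_zero μ Z hZae
          (fun (t : Fin k × Fin m) e => φ (↑t.1) e i t.2 * ξ e j)
          (fun t => (hφm _ i t.2).mul (hξm j))
          (fun (t : Fin k × Fin m) ω => v (↑t.1) ω t.2)
          (fun t => hgint _ (lt_of_lt_of_le t.1.2 hk) t.2)
          (fun t => hgmean' _ (lt_of_lt_of_le t.1.2 hk) t.2)
          (fun t => hgind _ (lt_of_lt_of_le t.1.2 hk) t.2)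
  · obtain ⟨φ, hφm, hφ⟩ := hx''rep k (le_of_lt hk)
    ext i j
    simp only [crossMoment, Matrix.of_apply, Matrix.zero_apply]
    have hrep : ∀ ω, u k ω i * x'' k ω j
        = ∑ t : Fin k × Fin m,
            ((Z ω).2.2 ⟨k, hk⟩ i * φ (↑t.1) (Z ω) j t.2) * v (↑t.1) ω t.2 := by
      intro ω
      rw [hφ ω, Fintype.sum_prod_type, Finset.sum_apply, Finset.mul_sum,
        ← Fin.sum_univ_eq_sum_range
          (fun l => u k ω i * ((φ l (Z ω)).mulVec (v l ω) j)) k]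
      refine Finset.sum_congr rfl fun l _ => ?_
      simp only [Matrix.mulVec, dotProduct, Finset.mul_sum]
      refine Finset.sum_congr rfl fun j' _ => ?_
      ring
    calc ∫ ω, u k ω i * x'' k ω j ∂μ
        = ∫ ω, ∑ t : Fin k × Fin m,
            (fun (t : Fin k × Fin m) e => e.2.2 ⟨k, hk⟩ i * φ (↑t.1) e j t.2) t (Z ω)
              * (fun (t : Fin k × Fin m) ω => v (↑t.1) ω t.2) t ω ∂μ :=
          integral_congr_ae (Filter.Eventually.of_forall fun ω => by simpa using hrep ω)
      _ = 0 := key_zero μ Z hZae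
          (fun (t : Fin k × Fin m) e => e.2.2 ⟨k, hk⟩ i * φ (↑t.1) e j t.2)
          (fun t => (measurable_snd.snd.eval.eval).fun_mul (hφm _ j t.2))
          (fun (t : Fin k × Fin m) ω => v (↑t.1) ω t.2)
          (fun t => hgint _ (lt_trans t.1.2 hk) t.2)
          (fun t => hgmean' _ (lt_trans t.1.2 hk) t.2)
          (fun t => hgind _ (lt_trans t.1.2 hk) t.2)
end

section
/- Let A, A_1, …, A_M be real n×n matrices and B a real n×m matrix. Let (V_k)_{0≤k≤N} be positive semidefinite real (n+m)×(n+m) matrices with blocks V_k = [[X_k, R_k],[R_kᵀ, U_k]], where each X_k is invertible, satisfying X_{k+1} = [A B] V_k [A B]ᵀ + Σ_{i=1}^M A_i X_k A_iᵀ + I_n for 0 ≤ k < N. On a probability space, let x_0 be an ℝ^n-valued random vector with E[x_0 x_0ᵀ] = X_0, and define recursively u_k = R_kᵀ X_k⁻¹ x_k + v_k and x_{k+1} = (A + Σ_{i=1}^M σ_k(i) A_i) x_k + B u_k + w_k, where for each k: v_k is an ℝ^m-valued random vector with finite second moments, mean zero, E[v_k x_kᵀ] = 0, and E[v_k v_kᵀ]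 = U_k − R_kᵀ X_k⁻¹ R_k; w_k is an ℝ^n-valued random vector with finite second moments, E[w_k x_kᵀ] = 0, E[w_k u_kᵀ] = 0, E[w_k w_kᵀ] = I_n; and (σ_k(1),…,σ_k(M)) is a vector of real random variables with finite second moments, independent of (x_k, u_k, w_k), with E[σ_k(i)] = 0 and E[σ_k(i)σ_k(j)] = δ(i−j). Then E[(x_k;u_k)(x_k;u_k)ᵀ] = V_k for every 0 ≤ k ≤ N (with U_N interpreted via any u_N constructed in the same way). -/
open MeasureTheory Matrix

/-- Horizontal concatenation `[A B]` of two matrices with the same row index. -/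
def hcat {n p q : ℕ} {α : Type*} (A : Matrix (Fin n) (Fin p) α) (B : Matrix (Fin n) (Fin q) α) :
    Matrix (Fin n) (Fin (p + q)) α :=
  Matrix.of fun i => Fin.append (A i) (B i)

/-- Vertical concatenation of two matrices with the same column index. -/
def vcat {p q n : ℕ} {α : Type*} (A : Matrix (Fin p) (Fin n) α) (B : Matrix (Fin q) (Fin n) α) :
    Matrix (Fin (p + q)) (Fin n) α :=
  Matrix.of (Fin.append A B)

open ProbabilityTheory

section helpers

variable {Ω : Type*} [MeasurableSpace Ω] {μ : Measure Ω}

lemma l2_apply {d : ℕ} {a : Ω → Fin d → ℝ} (ha : MemLp a 2 μ) (i : Fin d) :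
    MemLp (fun ω => a ω i) 2 μ :=
  (ContinuousLinearMap.proj (R := ℝ) (φ := fun _ : Fin d => ℝ) i).comp_memLp' ha

lemma l2_mul_integrable {f g : Ω → ℝ} (hf : MemLp f 2 μ) (hg : MemLp g 2 μ) :
    Integrable (fun ω => f ω * g ω) μ := by
  have h : MemLp (f • g) 1 μ := hg.smul hf
  have : (f • g) = fun ω => f ω * g ω := by funext ω; simp [smul_eq_mul]
  rw [this] at h
  exact memLp_one_iff_integrable.mp h

lemma l2_mulVec {d p : ℕ} {a : Ω → Fin d → ℝ} (ha : ∀ i, MemLp (fun ω => a ω i) 2 μ)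
    (M : Matrix (Fin p) (Fin d) ℝ) (i : Fin p) :
    MemLp (fun ω => M.mulVec (a ω) i) 2 μ := by
  have : (fun ω => M.mulVec (a ω) i) = fun ω => ∑ j, M i j * a ω j := by
    funext ω; simp [Matrix.mulVec, dotProduct]
  rw [this, show (fun ω => ∑ j, M i j * a ω j) = ∑ j : Fin d, fun ω => M i j * a ω j by
    funext ω; simp]
  exact memLp_finset_sum' _ (fun j _ => (ha j).const_mul (M i j))

lemma vec_aesm {d : ℕ} {a : Ω → Fin d → ℝ} (h : ∀ i, MemLp (fun ω => a ω i) 2 μ) :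
    AEStronglyMeasurable a μ := by
  choose g hgm hge using fun i => ((h i).1.aemeasurable)
  refine aestronglyMeasurable_iff_aemeasurable.mpr
    ⟨fun ω i => g i ω, measurable_pi_iff.mpr hgm, ?_⟩
  filter_upwards [ae_all_iff.mpr hge] with ω hω
  funext i; exact hω i

lemma indep_mul_memℒp {f g : Ω → ℝ} (hindep : IndepFun f g μ)
    (hf : MemLp f 2 μ) (hg : MemLp g 2 μ) :
    MemLp (fun ω => f ω * g ω) 2 μ := by
  have hasm : AEStronglyMeasurable (fun ω => f ω * g ω) μ := hf.1.mul hg.1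
  rw [memLp_two_iff_integrable_sq hasm]
  have h2 : IndepFun (fun ω => f ω ^ 2) (fun ω => g ω ^ 2) μ :=
    hindep.comp (measurable_id.pow_const 2) (measurable_id.pow_const 2)
  have hint := h2.integrable_mul ((memLp_two_iff_integrable_sq hf.1).mp hf)
    ((memLp_two_iff_integrable_sq hg.1).mp hg)
  have : ((fun ω => f ω ^ 2) * fun ω => g ω ^ 2) = fun ω => (f ω * g ω) ^ 2 := by
    funext ω; simp [mul_pow]
  rwa [this] at hint

lemma continuous_mulVec_apply {p d : ℕ} (M : Matrix (Fin p) (Fin d) ℝ) (c : Fin p) :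
    Continuous fun v : Fin d → ℝ => M.mulVec v c := by
  simp only [Matrix.mulVec, dotProduct]
  exact continuous_finset_sum _ fun l _ => continuous_const.mul (continuous_apply l)

lemma crossMoment_comm {d e : ℕ} (a : Ω → Fin d → ℝ) (b : Ω → Fin e → ℝ) :
    crossMoment μ a b = (crossMoment μ b a)ᵀ := by
  ext i j; simp [crossMoment, mul_comm]

lemma crossMoment_add_right {d e : ℕ} {a : Ω → Fin d → ℝ} {b c : Ω → Fin e → ℝ}
    (ha : ∀ i, MemLp (fun ω => a ω i) 2 μ) (hb : ∀ i, MemLp (fun ω => b ω i) 2 μ)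
    (hc : ∀ i, MemLp (fun ω => c ω i) 2 μ) :
    crossMoment μ a (fun ω => b ω + c ω) = crossMoment μ a b + crossMoment μ a c := by
  ext i j
  simp only [crossMoment, Matrix.of_apply, Matrix.add_apply, Pi.add_apply]
  rw [← integral_add (l2_mul_integrable (ha i) (hb j)) (l2_mul_integrable (ha i) (hc j))]
  congr 1; funext ω; ring

lemma crossMoment_add_left {d e : ℕ} {a b : Ω → Fin d → ℝ} {c : Ω → Fin e → ℝ}
    (ha : ∀ i, MemLp (fun ω => a ω i) 2 μ) (hb : ∀ i, MemLp (fun ω => b ω i) 2 μ)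
    (hc : ∀ i, MemLp (fun ω => c ω i) 2 μ) :
    crossMoment μ (fun ω => a ω + b ω) c = crossMoment μ a c + crossMoment μ b c := by
  ext i j
  simp only [crossMoment, Matrix.of_apply, Matrix.add_apply, Pi.add_apply]
  rw [← integral_add (l2_mul_integrable (ha i) (hc j)) (l2_mul_integrable (hb i) (hc j))]
  congr 1; funext ω; ring

lemma crossMoment_mulVec_left {d e p : ℕ} (M : Matrix (Fin p) (Fin d) ℝ)
    {a : Ω → Fin d → ℝ} {b : Ω → Fin e → ℝ}
    (ha : ∀ i, MemLp (fun ω => a ω i) 2 μ) (hb : ∀ i, MemLp (fun ω => b ω i) 2 μ) :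
    crossMoment μ (fun ω => M.mulVec (a ω)) b = M * crossMoment μ a b := by
  ext i j
  simp only [crossMoment, Matrix.of_apply, Matrix.mul_apply, Matrix.mulVec, dotProduct]
  rw [show (fun ω => (∑ l, M i l * a ω l) * b ω j) = fun ω => ∑ l, M i l * (a ω l * b ω j) by
    funext ω; rw [Finset.sum_mul]; exact Finset.sum_congr rfl fun l _ => mul_assoc _ _ _]
  rw [integral_finset_sum _ (fun l _ => (l2_mul_integrable (ha l) (hb j)).const_mul (M i l))]
  exact Finset.sum_congr rfl fun l _ => integral_const_mul _ _

lemma crossMoment_mulVec_right {d e p : ℕ} (M : Matrix (Fin p) (Fin e) ℝ)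
    {a : Ω → Fin d → ℝ} {b : Ω → Fin e → ℝ}
    (ha : ∀ i, MemLp (fun ω => a ω i) 2 μ) (hb : ∀ i, MemLp (fun ω => b ω i) 2 μ) :
    crossMoment μ a (fun ω => M.mulVec (b ω)) = crossMoment μ a b * Mᵀ := by
  rw [crossMoment_comm, crossMoment_mulVec_left M hb ha, Matrix.transpose_mul,
    ← crossMoment_comm]

lemma crossMoment_sum_sum {ι κ : Type*} [Fintype ι] [Fintype κ] {d e : ℕ}
    (f : ι → Ω → Fin d → ℝ) (g : κ → Ω → Fin e → ℝ)
    (hf : ∀ i a, MemLp (fun ω => f i ω a) 2 μ) (hg : ∀ j b, MemLp (fun ω => g j ω b) 2 μ) :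
    crossMoment μ (fun ω => ∑ i, f i ω) (fun ω => ∑ j, g j ω)
      = ∑ i, ∑ j, crossMoment μ (f i) (g j) := by
  ext a b
  simp only [crossMoment, Matrix.of_apply, Finset.sum_apply, Matrix.sum_apply]
  rw [show (fun ω => (∑ i, f i ω a) * ∑ j, g j ω b)
      = fun ω => ∑ i, ∑ j, f i ω a * g j ω b by
    funext ω; rw [Finset.sum_mul_sum]]
  rw [integral_finset_sum _ (fun i _ => integrable_finset_sum _
    (fun j _ => l2_mul_integrable (hf i a) (hg j b)))]
  exact Finset.sum_congr rfl fun i _ => integral_finset_sum _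
    (fun j _ => l2_mul_integrable (hf i a) (hg j b))

lemma fin_append_castAdd_apply {p q r : ℕ} {α : Type*} (C : Matrix (Fin p) (Fin r) α)
    (D : Matrix (Fin q) (Fin r) α) (i : Fin p) (j : Fin r) :
    Fin.append C D (Fin.castAdd q i) j = C i j :=
  congrFun (Fin.append_left (α := Fin r → α) C D i) j

lemma fin_append_natAdd_apply {p q r : ℕ} {α : Type*} (C : Matrix (Fin p) (Fin r) α)
    (D : Matrix (Fin q) (Fin r) α) (i : Fin q) (j : Fin r) :
    Fin.append C D (Fin.natAdd p i) j = D i j :=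
  congrFun (Fin.append_right (α := Fin r → α) C D i) j

lemma crossMoment_append {dn dm en em : ℕ}
    (a : Ω → Fin dn → ℝ) (b : Ω → Fin dm → ℝ) (c : Ω → Fin en → ℝ) (d : Ω → Fin em → ℝ) :
    crossMoment μ (fun ω => Fin.append (a ω) (b ω)) (fun ω => Fin.append (c ω) (d ω))
      = vcat (hcat (crossMoment μ a c) (crossMoment μ a d))
          (hcat (crossMoment μ b c) (crossMoment μ b d)) := by
  ext i j
  refine Fin.addCases (fun i1 => ?_) (fun i1 => ?_) i <;>
    refine Fin.addCases (fun j1 => ?_) (fun j1 => ?_) j <;>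
    simp [crossMoment, vcat, hcat, Fin.append_left, Fin.append_right, fin_append_castAdd_apply, fin_append_natAdd_apply]

lemma hcat_mul_vcat {n' p q r : ℕ} (A : Matrix (Fin n') (Fin p) ℝ) (B : Matrix (Fin n') (Fin q) ℝ)
    (C : Matrix (Fin p) (Fin r) ℝ) (D : Matrix (Fin q) (Fin r) ℝ) :
    hcat A B * vcat C D = A * C + B * D := by
  ext i j
  simp [Matrix.mul_apply, hcat, vcat, Fin.sum_univ_add, Fin.append_left, Fin.append_right,
    Matrix.add_apply, fin_append_castAdd_apply, fin_append_natAdd_apply]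

lemma mul_hcat {n' p q r : ℕ} (C : Matrix (Fin r) (Fin n') ℝ) (A : Matrix (Fin n') (Fin p) ℝ)
    (B : Matrix (Fin n') (Fin q) ℝ) :
    C * hcat A B = hcat (C * A) (C * B) := by
  ext i j
  refine Fin.addCases (fun j1 => ?_) (fun j1 => ?_) j <;>
    simp [Matrix.mul_apply, hcat, Fin.append_left, Fin.append_right]

lemma transpose_hcat {n' p q : ℕ} (A : Matrix (Fin n') (Fin p) ℝ) (B : Matrix (Fin n') (Fin q) ℝ) :
    (hcat A B)ᵀ = vcat Aᵀ Bᵀ := by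
  ext i j
  refine Fin.addCases (fun i1 => ?_) (fun i1 => ?_) i <;>
    simp [hcat, vcat, Fin.append_left, Fin.append_right, fin_append_castAdd_apply, fin_append_natAdd_apply]

lemma hcat_quad {n' m' : ℕ} (A : Matrix (Fin n') (Fin n') ℝ) (B : Matrix (Fin n') (Fin m') ℝ)
    (X : Matrix (Fin n') (Fin n') ℝ) (R : Matrix (Fin n') (Fin m') ℝ)
    (U : Matrix (Fin m') (Fin m') ℝ) :
    hcat A B * vcat (hcat X R) (hcat Rᵀ U) * (hcat A B)ᵀ
      = A * X * Aᵀ + A * R * Bᵀ + B * Rᵀ * Aᵀ + B * U * Bᵀ := by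
  rw [hcat_mul_vcat, transpose_hcat, Matrix.add_mul, mul_hcat, mul_hcat,
    hcat_mul_vcat, hcat_mul_vcat]
  noncomm_ring

end helpers

section stepU

variable {Ω : Type*} [MeasurableSpace Ω] {μ : Measure Ω}

lemma stepU {n m : ℕ}
    {X : Matrix (Fin n) (Fin n) ℝ} {R : Matrix (Fin n) (Fin m) ℝ} {U : Matrix (Fin m) (Fin m) ℝ}
    (hXsymm : Xᵀ = X) (hXinv : IsUnit X.det)
    {x : Ω → Fin n → ℝ} {u v : Ω → Fin m → ℝ}
    (hxl2 : ∀ i, MemLp (fun ω => x ω i) 2 μ)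
    (hxx : crossMoment μ x x = X)
    (hu : ∀ ω, u ω = (Rᵀ * X⁻¹).mulVec (x ω) + v ω)
    (hvl2 : MemLp v 2 μ)
    (hvx : crossMoment μ v x = 0)
    (hvv : crossMoment μ v v = U - Rᵀ * X⁻¹ * R) :
    (∀ i, MemLp (fun ω => u ω i) 2 μ) ∧ crossMoment μ x u = R ∧
      crossMoment μ u x = Rᵀ ∧ crossMoment μ u u = U := by
  set K : Matrix (Fin m) (Fin n) ℝ := Rᵀ * X⁻¹ with hK
  have hue : u = fun ω => K.mulVec (x ω) + v ω := funext hu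
  have hvl2' : ∀ i, MemLp (fun ω => v ω i) 2 μ := fun i => l2_apply hvl2 i
  have hKx : ∀ i, MemLp (fun ω => K.mulVec (x ω) i) 2 μ := l2_mulVec hxl2 K
  have hul2 : ∀ i, MemLp (fun ω => u ω i) 2 μ := by
    intro i
    rw [hue]
    exact ((hKx i).add (hvl2' i))
  have hxv : crossMoment μ x v = 0 := by
    rw [crossMoment_comm, hvx, Matrix.transpose_zero]
  -- key inverse facts
  have hXinvT : (X⁻¹)ᵀ = X⁻¹ := by rw [Matrix.transpose_nonsing_inv, hXsymm]
  have hXXi : X * X⁻¹ = 1 := Matrix.mul_nonsing_inv X hXinv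
  have hXiX : X⁻¹ * X = 1 := Matrix.nonsing_inv_mul X hXinv
  have hKT : Kᵀ = X⁻¹ * R := by
    rw [hK, Matrix.transpose_mul, hXinvT, Matrix.transpose_transpose]
  have hxu : crossMoment μ x u = R := by
    rw [hue, crossMoment_add_right hxl2 hKx hvl2', crossMoment_mulVec_right K hxl2 hxl2,
      hxx, hxv, hKT, add_zero, ← Matrix.mul_assoc, hXXi, Matrix.one_mul]
  have hux : crossMoment μ u x = Rᵀ := by
    rw [crossMoment_comm, hxu]
  have hul2'' : ∀ i, MemLp (fun ω => (K.mulVec (x ω) + v ω) i) 2 μ :=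
    fun i => (hKx i).add (hvl2' i)
  have huu : crossMoment μ u u = U := by
    rw [hue, crossMoment_add_left hKx hvl2' hul2'',
      crossMoment_add_right hKx hKx hvl2', crossMoment_add_right hvl2' hKx hvl2',
      crossMoment_mulVec_left K hxl2 hvl2', crossMoment_mulVec_right K hvl2' hxl2,
      crossMoment_mulVec_left K hxl2 hKx, crossMoment_mulVec_right K hxl2 hxl2,
      hxx, hxv, hvx, hvv, hKT]
    simp only [Matrix.mul_zero, Matrix.zero_mul, add_zero, zero_add]
    rw [hK]
    have h1 : X⁻¹ * (X * (X⁻¹ * R)) = X⁻¹ * R := by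
      rw [← Matrix.mul_assoc X⁻¹ X, hXiX, Matrix.one_mul]
    rw [Matrix.mul_assoc Rᵀ X⁻¹, h1, ← Matrix.mul_assoc]
    noncomm_ring
  exact ⟨hul2, hxu, hux, huu⟩

end stepU

section stepX

variable {Ω : Type*} [MeasurableSpace Ω] {μ : Measure Ω}

lemma stepX [IsProbabilityMeasure μ] {n m M : ℕ}
    (A : Matrix (Fin n) (Fin n) ℝ) (Ai : Fin M → Matrix (Fin n) (Fin n) ℝ)
    (B : Matrix (Fin n) (Fin m) ℝ)
    {X : Matrix (Fin n) (Fin n) ℝ} {R : Matrix (Fin n) (Fin m) ℝ} {U : Matrix (Fin m) (Fin m) ℝ}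
    {x x' : Ω → Fin n → ℝ} {u : Ω → Fin m → ℝ} {w : Ω → Fin n → ℝ} {σ : Fin M → Ω → ℝ}
    (hxl2 : ∀ i, MemLp (fun ω => x ω i) 2 μ) (hul2 : ∀ i, MemLp (fun ω => u ω i) 2 μ)
    (hxx : crossMoment μ x x = X) (hxu : crossMoment μ x u = R)
    (hux : crossMoment μ u x = Rᵀ) (huu : crossMoment μ u u = U)
    (hx' : ∀ ω, x' ω = (A + ∑ i, σ i ω • Ai i).mulVec (x ω) + B.mulVec (u ω) + w ω)
    (hwl2 : MemLp w 2 μ) (hwx : crossMoment μ w x = 0) (hwu : crossMoment μ w u = 0)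
    (hww : crossMoment μ w w = 1)
    (hσl2 : ∀ i, MemLp (σ i) 2 μ)
    (hσindep : ProbabilityTheory.IndepFun (fun ω i => σ i ω) (fun ω => (x ω, u ω, w ω)) μ)
    (hσmean : ∀ i, ∫ ω, σ i ω ∂μ = 0)
    (hσcov : ∀ i j, ∫ ω, σ i ω * σ j ω ∂μ = if i = j then (1:ℝ) else 0) :
    (∀ a, MemLp (fun ω => x' ω a) 2 μ) ∧
      crossMoment μ x' x' = A * X * Aᵀ + A * R * Bᵀ + B * Rᵀ * Aᵀ + B * U * Bᵀ
        + (∑ i, Ai i * X * (Ai i)ᵀ) + 1 := by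
  classical
  set T : Ω → (Fin n → ℝ) × (Fin m → ℝ) × (Fin n → ℝ) := fun ω => (x ω, u ω, w ω) with hT
  have hwl2' : ∀ i, MemLp (fun ω => w ω i) 2 μ := fun i => l2_apply hwl2 i
  have hTasm : AEStronglyMeasurable T μ :=
    (vec_aesm hxl2).prodMk ((vec_aesm hul2).prodMk (vec_aesm hwl2'))
  -- the four summands
  set f1 : Ω → Fin n → ℝ := fun ω => A.mulVec (x ω) with hf1
  set f2 : Ω → Fin n → ℝ := fun ω => ∑ i, σ i ω • (Ai i).mulVec (x ω) with hf2
  set f3 : Ω → Fin n → ℝ := fun ω => B.mulVec (u ω) with hf3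
  set f4 : Ω → Fin n → ℝ := fun ω => w ω with hf4
  -- independence helpers
  have key0 : ∀ (i : Fin M) (ψ : (Fin n → ℝ) × (Fin m → ℝ) × (Fin n → ℝ) → ℝ),
      Continuous ψ → ∫ ω, σ i ω * ψ (T ω) ∂μ = 0 := by
    intro i ψ hψ
    have hind : ProbabilityTheory.IndepFun (fun ω => σ i ω) (fun ω => ψ (T ω)) μ :=
      hσindep.comp (measurable_pi_apply i) hψ.measurable
    rw [show ∫ ω, σ i ω * ψ (T ω) ∂μ = _ from
      hind.integral_mul_eq_mul_integral (hσl2 i).1 (hψ.comp_aestronglyMeasurable hTasm), hσmean i, zero_mul]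
  have key2 : ∀ (i j : Fin M) (ψ : (Fin n → ℝ) × (Fin m → ℝ) × (Fin n → ℝ) → ℝ),
      Continuous ψ → ∫ ω, (σ i ω * σ j ω) * ψ (T ω) ∂μ
        = (if i = j then (1:ℝ) else 0) * ∫ ω, ψ (T ω) ∂μ := by
    intro i j ψ hψ
    have hind : ProbabilityTheory.IndepFun (fun ω => σ i ω * σ j ω) (fun ω => ψ (T ω)) μ :=
      hσindep.comp ((measurable_pi_apply i).mul (measurable_pi_apply j)) hψ.measurable
    rw [show ∫ ω, (σ i ω * σ j ω) * ψ (T ω) ∂μ = _ from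
      hind.integral_mul_eq_mul_integral ((hσl2 i).1.mul (hσl2 j).1) (hψ.comp_aestronglyMeasurable hTasm),
      hσcov i j]
  -- L² of components
  have hg : ∀ (i : Fin M) (a : Fin n), MemLp (fun ω => (Ai i).mulVec (x ω) a) 2 μ :=
    fun i a => l2_mulVec hxl2 (Ai i) a
  have hσg : ∀ (i : Fin M) (a : Fin n),
      MemLp (fun ω => σ i ω * (Ai i).mulVec (x ω) a) 2 μ := by
    intro i a
    have hind : ProbabilityTheory.IndepFun (σ i) (fun ω => (Ai i).mulVec (x ω) a) μ :=
      hσindep.comp (measurable_pi_apply i)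
        (((continuous_mulVec_apply (Ai i) a).comp continuous_fst).measurable)
    exact indep_mul_memℒp hind (hσl2 i) (hg i a)
  have hf1l2 : ∀ a, MemLp (fun ω => f1 ω a) 2 μ := l2_mulVec hxl2 A
  have hf2l2 : ∀ a, MemLp (fun ω => f2 ω a) 2 μ := by
    intro a
    have : (fun ω => f2 ω a) = ∑ i : Fin M, fun ω => σ i ω * (Ai i).mulVec (x ω) a := by
      funext ω; simp [hf2]
    rw [this]
    exact memLp_finset_sum' _ fun i _ => hσg i a
  have hf3l2 : ∀ a, MemLp (fun ω => f3 ω a) 2 μ := l2_mulVec hul2 B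
  have hf4l2 : ∀ a, MemLp (fun ω => f4 ω a) 2 μ := hwl2'
  -- decompose x'
  set F : Fin 4 → Ω → Fin n → ℝ := ![f1, f2, f3, f4] with hF
  have hFl2 : ∀ i a, MemLp (fun ω => F i ω a) 2 μ := by
    intro i a
    fin_cases i
    · exact hf1l2 a
    · exact hf2l2 a
    · exact hf3l2 a
    · exact hf4l2 a
  have hxe : x' = fun ω => ∑ i, F i ω := by
    funext ω
    rw [hx' ω]
    simp only [hF, Fin.sum_univ_four, Matrix.cons_val_zero, Matrix.cons_val_one, Matrix.head_cons,
      Matrix.cons_val_two, Matrix.tail_cons, Matrix.cons_val_three]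
    rw [Matrix.add_mulVec]
    have hsmv : (∑ i, σ i ω • Ai i) *ᵥ x ω = ∑ i, σ i ω • (Ai i *ᵥ x ω) := by
      ext a
      simp only [Matrix.mulVec, dotProduct, Matrix.sum_apply, Matrix.smul_apply,
        smul_eq_mul, Finset.sum_apply, Pi.smul_apply, Finset.sum_mul, Finset.mul_sum, mul_assoc]
      exact Finset.sum_comm
    rw [hsmv]
  have hxl2' : ∀ a, MemLp (fun ω => x' ω a) 2 μ := by
    intro a
    rw [hxe, show (fun ω => (∑ i, F i ω) a) = ∑ i : Fin 4, fun ω => F i ω a by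
      funext ω; simp]
    exact memLp_finset_sum' _ fun i _ => hFl2 i a
  refine ⟨hxl2', ?_⟩
  rw [hxe, crossMoment_sum_sum F F hFl2 hFl2]
  -- the sixteen terms
  have hm11 : crossMoment μ f1 f1 = A * X * Aᵀ := by
    rw [hf1, crossMoment_mulVec_left A hxl2 (l2_mulVec hxl2 A),
      crossMoment_mulVec_right A hxl2 hxl2, hxx, Matrix.mul_assoc]
  have hm13 : crossMoment μ f1 f3 = A * R * Bᵀ := by
    rw [hf1, hf3, crossMoment_mulVec_left A hxl2 (l2_mulVec hul2 B),
      crossMoment_mulVec_right B hxl2 hul2, hxu, Matrix.mul_assoc]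
  have hm31 : crossMoment μ f3 f1 = B * Rᵀ * Aᵀ := by
    rw [hf3, hf1, crossMoment_mulVec_left B hul2 (l2_mulVec hxl2 A),
      crossMoment_mulVec_right A hul2 hxl2, hux, Matrix.mul_assoc]
  have hm33 : crossMoment μ f3 f3 = B * U * Bᵀ := by
    rw [hf3, crossMoment_mulVec_left B hul2 (l2_mulVec hul2 B),
      crossMoment_mulVec_right B hul2 hul2, huu, Matrix.mul_assoc]
  have hm41 : crossMoment μ f4 f1 = 0 := by
    rw [hf4, hf1, crossMoment_mulVec_right A hwl2' hxl2, hwx, Matrix.zero_mul]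
  have hm14 : crossMoment μ f1 f4 = 0 := by
    rw [crossMoment_comm, hm41, Matrix.transpose_zero]
  have hm43 : crossMoment μ f4 f3 = 0 := by
    rw [hf4, hf3, crossMoment_mulVec_right B hwl2' hul2, hwu, Matrix.zero_mul]
  have hm34 : crossMoment μ f3 f4 = 0 := by
    rw [crossMoment_comm, hm43, Matrix.transpose_zero]
  have hm44 : crossMoment μ f4 f4 = 1 := hww
  -- f2 against a generic L² vector h with continuous representation
  have hzero : ∀ (e : ℕ) (h : Ω → Fin e → ℝ)
      (ψ : (Fin n → ℝ) × (Fin m → ℝ) × (Fin n → ℝ) → Fin e → ℝ),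
      (∀ b, Continuous fun p => ψ p b) → (∀ ω, h ω = ψ (T ω)) →
      (∀ b, MemLp (fun ω => h ω b) 2 μ) →
      crossMoment μ f2 h = 0 := by
    intro e h ψ hψc hhT hhl2
    ext a b
    simp only [crossMoment, Matrix.of_apply, Matrix.zero_apply]
    rw [show (fun ω => f2 ω a * h ω b)
        = fun ω => ∑ i, (σ i ω * (Ai i).mulVec (x ω) a) * h ω b by
      funext ω; rw [hf2]; simp [Finset.sum_mul]]
    rw [integral_finset_sum _ (fun i _ => l2_mul_integrable (hσg i a) (hhl2 b))]
    refine Finset.sum_eq_zero fun i _ => ?_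
    have := key0 i (fun p => (Ai i).mulVec p.1 a * ψ p b)
      (((continuous_mulVec_apply (Ai i) a).comp continuous_fst).mul (hψc b))
    rw [← this]
    congr 1; funext ω
    rw [hhT ω, mul_assoc]
  have hm21 : crossMoment μ f2 f1 = 0 := by
    refine hzero n f1 (fun p => A.mulVec p.1) (fun b => (continuous_mulVec_apply A b).comp
      continuous_fst) (fun ω => rfl) hf1l2
  have hm23 : crossMoment μ f2 f3 = 0 := by
    refine hzero n f3 (fun p => B.mulVec p.2.1)
      (fun b => (continuous_mulVec_apply B b).comp (continuous_fst.comp continuous_snd))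
      (fun ω => rfl) hf3l2
  have hm24 : crossMoment μ f2 f4 = 0 := by
    refine hzero n f4 (fun p => p.2.2)
      (fun b => (continuous_apply b).comp (continuous_snd.comp continuous_snd))
      (fun ω => rfl) hf4l2
  have hm12 : crossMoment μ f1 f2 = 0 := by
    rw [crossMoment_comm, hm21, Matrix.transpose_zero]
  have hm32 : crossMoment μ f3 f2 = 0 := by
    rw [crossMoment_comm, hm23, Matrix.transpose_zero]
  have hm42 : crossMoment μ f4 f2 = 0 := by
    rw [crossMoment_comm, hm24, Matrix.transpose_zero]
  have hAX : ∀ i : Fin M, crossMoment μ (fun ω => (Ai i).mulVec (x ω))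
      (fun ω => (Ai i).mulVec (x ω)) = Ai i * X * (Ai i)ᵀ := by
    intro i
    rw [crossMoment_mulVec_left (Ai i) hxl2 (l2_mulVec hxl2 (Ai i)),
      crossMoment_mulVec_right (Ai i) hxl2 hxl2, hxx, Matrix.mul_assoc]
  have hm22 : crossMoment μ f2 f2 = ∑ i, Ai i * X * (Ai i)ᵀ := by
    ext a b
    simp only [crossMoment, Matrix.of_apply, Matrix.sum_apply]
    rw [show (fun ω => f2 ω a * f2 ω b)
        = fun ω => ∑ i, ∑ j, (σ i ω * (Ai i).mulVec (x ω) a) * (σ j ω * (Ai j).mulVec (x ω) b) by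
      funext ω; rw [hf2]; simp only [Finset.sum_apply, Pi.smul_apply, smul_eq_mul]
      rw [Finset.sum_mul_sum]]
    rw [integral_finset_sum _ (fun i _ => integrable_finset_sum _
      (fun j _ => l2_mul_integrable (hσg i a) (hσg j b)))]
    have hterm : ∀ i j : Fin M, ∫ ω, (σ i ω * (Ai i).mulVec (x ω) a)
        * (σ j ω * (Ai j).mulVec (x ω) b) ∂μ
        = (if i = j then (1:ℝ) else 0) * ∫ ω, (Ai i).mulVec (x ω) a * (Ai j).mulVec (x ω) b ∂μ := by
      intro i j
      have hc : Continuous fun p : (Fin n → ℝ) × (Fin m → ℝ) × (Fin n → ℝ) =>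
          (Ai i).mulVec p.1 a * (Ai j).mulVec p.1 b :=
        ((continuous_mulVec_apply (Ai i) a).comp continuous_fst).mul
          ((continuous_mulVec_apply (Ai j) b).comp continuous_fst)
      have := key2 i j _ hc
      rw [← this]
      congr 1; funext ω; ring
    calc ∑ i, ∫ ω, ∑ j, (σ i ω * (Ai i).mulVec (x ω) a) * (σ j ω * (Ai j).mulVec (x ω) b) ∂μ
        = ∑ i, ∑ j, ∫ ω, (σ i ω * (Ai i).mulVec (x ω) a)
            * (σ j ω * (Ai j).mulVec (x ω) b) ∂μ := by
          exact Finset.sum_congr rfl fun i _ => integral_finset_sum _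
            (fun j _ => l2_mul_integrable (hσg i a) (hσg j b))
      _ = ∑ i, ∑ j, (if i = j then (1:ℝ) else 0)
            * ∫ ω, (Ai i).mulVec (x ω) a * (Ai j).mulVec (x ω) b ∂μ := by
          exact Finset.sum_congr rfl fun i _ => Finset.sum_congr rfl fun j _ => hterm i j
      _ = ∑ i, ∫ ω, (Ai i).mulVec (x ω) a * (Ai i).mulVec (x ω) b ∂μ := by
          refine Finset.sum_congr rfl fun i _ => ?_
          rw [Finset.sum_eq_single i]
          · simp
          · intro j _ hji; simp [Ne.symm hji]
          · intro hi; exact absurd (Finset.mem_univ i) hi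
      _ = ∑ i, (Ai i * X * (Ai i)ᵀ) a b := by
          refine Finset.sum_congr rfl fun i _ => ?_
          have := congrFun (congrFun (hAX i) a) b
          exact this
  rw [Fin.sum_univ_four]
  simp only [hF, Matrix.cons_val_zero, Matrix.cons_val_one, Matrix.head_cons,
    Matrix.cons_val_two, Matrix.tail_cons, Matrix.cons_val_three, Fin.sum_univ_four]
  rw [hm11, hm12, hm13, hm14, hm21, hm22, hm23, hm24, hm31, hm32, hm33, hm34,
    hm41, hm42, hm43, hm44]
  abel

end stepX

theorem controller_realizes_covariance_sequence
    {Ω : Type*} [MeasurableSpace Ω] (μ : Measure Ω) [IsProbabilityMeasure μ]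
    {n m M N : ℕ}
    (A : Matrix (Fin n) (Fin n) ℝ) (Ai : Fin M → Matrix (Fin n) (Fin n) ℝ)
    (B : Matrix (Fin n) (Fin m) ℝ)
    (X : ℕ → Matrix (Fin n) (Fin n) ℝ) (R : ℕ → Matrix (Fin n) (Fin m) ℝ)
    (U : ℕ → Matrix (Fin m) (Fin m) ℝ)
    (hVpsd : ∀ k ≤ N, (vcat (hcat (X k) (R k)) (hcat (R k)ᵀ (U k))).PosSemidef)
    (hXinv : ∀ k ≤ N, IsUnit (X k).det)
    (hXrec : ∀ k < N, X (k + 1) =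
      hcat A B * vcat (hcat (X k) (R k)) (hcat (R k)ᵀ (U k)) * (hcat A B)ᵀ
        + ∑ i, Ai i * X k * (Ai i)ᵀ + 1)
    (x : ℕ → Ω → Fin n → ℝ) (u v : ℕ → Ω → Fin m → ℝ)
    (w : ℕ → Ω → Fin n → ℝ) (σ : ℕ → Fin M → Ω → ℝ)
    (hx0mom : MemLp (x 0) 2 μ)
    (hx0 : crossMoment μ (x 0) (x 0) = X 0)
    (hu : ∀ k ≤ N, ∀ ω, u k ω = ((R k)ᵀ * (X k)⁻¹).mulVec (x k ω) + v k ω)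
    (hxrec : ∀ k < N, ∀ ω, x (k + 1) ω =
      (A + ∑ i, σ k i ω • Ai i).mulVec (x k ω) + B.mulVec (u k ω) + w k ω)
    (hvmom : ∀ k ≤ N, MemLp (v k) 2 μ)
    (hvmean : ∀ k ≤ N, ∫ ω, v k ω ∂μ = 0)
    (hvx : ∀ k ≤ N, crossMoment μ (v k) (x k) = 0)
    (hvv : ∀ k ≤ N, crossMoment μ (v k) (v k) = U k - (R k)ᵀ * (X k)⁻¹ * R k)
    (hwmom : ∀ k < N, MemLp (w k) 2 μ)
    (hwx : ∀ k < N, crossMoment μ (w k) (x k) = 0)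
    (hwu : ∀ k < N, crossMoment μ (w k) (u k) = 0)
    (hww : ∀ k < N, crossMoment μ (w k) (w k) = 1)
    (hσmom : ∀ k < N, ∀ i, MemLp (σ k i) 2 μ)
    (hσindep : ∀ k < N, ProbabilityTheory.IndepFun (fun ω i => σ k i ω)
      (fun ω => (x k ω, u k ω, w k ω)) μ)
    (hσmean : ∀ k < N, ∀ i, ∫ ω, σ k i ω ∂μ = 0)
    (hσcov : ∀ k < N, ∀ i j, ∫ ω, σ k i ω * σ k j ω ∂μ = if i = j then (1 : ℝ) else 0) :
    ∀ k ≤ N, crossMoment μ (fun ω => Fin.append (x k ω) (u k ω))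
        (fun ω => Fin.append (x k ω) (u k ω))
      = vcat (hcat (X k) (R k)) (hcat (R k)ᵀ (U k)) := by
  have hXs : ∀ k ≤ N, (X k)ᵀ = X k := by
    intro k hk
    have hherm := (hVpsd k hk).1
    ext i j
    have h2 := congrFun (congrFun hherm (Fin.castAdd m i)) (Fin.castAdd m j)
    simpa [vcat, hcat, Matrix.conjTranspose_apply, Fin.append_left, fin_append_castAdd_apply] using h2
  have key : ∀ k, k ≤ N →
      (∀ i, MemLp (fun ω => x k ω i) 2 μ) ∧ crossMoment μ (x k) (x k) = X k := by
    intro k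
    induction k with
    | zero => exact fun _ => ⟨fun i => l2_apply hx0mom i, hx0⟩
    | succ k ih =>
      intro hk1
      have hkN : k < N := hk1
      have hk : k ≤ N := le_of_lt hkN
      obtain ⟨hxl2, hxx⟩ := ih hk
      obtain ⟨hul2, hxu, hux, huu⟩ := stepU (hXs k hk) (hXinv k hk) hxl2 hxx (hu k hk)
        (hvmom k hk) (hvx k hk) (hvv k hk)
      obtain ⟨hl2', hxx'⟩ := stepX A Ai B hxl2 hul2 hxx hxu hux huu (hxrec k hkN)
        (hwmom k hkN) (hwx k hkN) (hwu k hkN) (hww k hkN) (hσmom k hkN) (hσindep k hkN)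
        (hσmean k hkN) (hσcov k hkN)
      refine ⟨hl2', ?_⟩
      rw [hxx', hXrec k hkN, hcat_quad]
  intro k hk
  obtain ⟨hxl2, hxx⟩ := key k hk
  obtain ⟨hul2, hxu, hux, huu⟩ := stepU (hXs k hk) (hXinv k hk) hxl2 hxx (hu k hk)
    (hvmom k hk) (hvx k hk) (hvv k hk)
  rw [crossMoment_append, hxx, hxu, hux, huu]
end

section
/- Let A, A_1, …, A_M be real n×n matrices and B a real n×m matrix. Suppose the positive semidefinite real (n+m)×(n+m) matrix V = [[X, R],[Rᵀ, U]] satisfies the equation X = [A B] V [A B]ᵀ + Σ_{i=1}^M A_i X A_iᵀ + I_n. Then X ⪰ I_n (so X is positive definite and invertible), and the gain K = Rᵀ X⁻¹ satisfies (A + B K) X (A + B K)ᵀ + Σ_{i=1}^M A_i X A_iᵀ + I_n ⪯ X. -/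
open Matrix

lemma hcat_eq {n p q : ℕ} {α : Type*} (A : Matrix (Fin n) (Fin p) α)
    (B : Matrix (Fin n) (Fin q) α) :
    hcat A B = (fromCols A B).submatrix id ⇑finSumFinEquiv.symm := by
  ext i j
  obtain ⟨k, rfl⟩ := finSumFinEquiv.surjective j
  cases k with
  | inl a => simp [hcat, fromCols, finSumFinEquiv_apply_left, Fin.append_left]
  | inr a => simp [hcat, fromCols, finSumFinEquiv_apply_right, Fin.append_right]

lemma fin_append_mat_left {p q n : ℕ} {α : Type*} (A : Matrix (Fin p) (Fin n) α)
    (B : Matrix (Fin q) (Fin n) α) (a : Fin p) (j : Fin n) :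
    Fin.append A B (Fin.castAdd q a) j = A a j :=
  congrFun (Fin.append_left (α := Fin n → α) A B a) j

lemma fin_append_mat_right {p q n : ℕ} {α : Type*} (A : Matrix (Fin p) (Fin n) α)
    (B : Matrix (Fin q) (Fin n) α) (a : Fin q) (j : Fin n) :
    Fin.append A B (Fin.natAdd p a) j = B a j :=
  congrFun (Fin.append_right (α := Fin n → α) A B a) j

lemma vcat_eq {p q n : ℕ} {α : Type*} (A : Matrix (Fin p) (Fin n) α)
    (B : Matrix (Fin q) (Fin n) α) :
    vcat A B = (fromRows A B).submatrix ⇑finSumFinEquiv.symm id := by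
  ext i j
  obtain ⟨k, rfl⟩ := finSumFinEquiv.surjective i
  cases k with
  | inl a => simp [vcat, finSumFinEquiv_apply_left, Fin.append_left, fin_append_mat_left]
  | inr a => simp [vcat, finSumFinEquiv_apply_right, Fin.append_right, fin_append_mat_right]

lemma vcat_hcat_eq {n m : ℕ} {α : Type*} (P : Matrix (Fin n) (Fin n) α)
    (Q : Matrix (Fin n) (Fin m) α) (S : Matrix (Fin m) (Fin n) α)
    (T : Matrix (Fin m) (Fin m) α) :
    vcat (hcat P Q) (hcat S T)
      = (fromBlocks P Q S T).submatrix ⇑finSumFinEquiv.symm ⇑finSumFinEquiv.symm := by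
  ext i j
  obtain ⟨a, rfl⟩ := finSumFinEquiv.surjective i
  obtain ⟨b, rfl⟩ := finSumFinEquiv.surjective j
  cases a <;> cases b <;>
    simp [vcat, hcat, fromBlocks, finSumFinEquiv_apply_left, finSumFinEquiv_apply_right,
      Fin.append_left, Fin.append_right, fin_append_mat_left, fin_append_mat_right]

theorem stationary_covariance_gives_stabilizing_gain
    {n m M : ℕ}
    (A : Matrix (Fin n) (Fin n) ℝ) (Ai : Fin M → Matrix (Fin n) (Fin n) ℝ)
    (B : Matrix (Fin n) (Fin m) ℝ)
    (X : Matrix (Fin n) (Fin n) ℝ) (R : Matrix (Fin n) (Fin m) ℝ)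
    (U : Matrix (Fin m) (Fin m) ℝ)
    (hV : (vcat (hcat X R) (hcat Rᵀ U)).PosSemidef)
    (heq : X = hcat A B * vcat (hcat X R) (hcat Rᵀ U) * (hcat A B)ᵀ
      + ∑ i, Ai i * X * (Ai i)ᵀ + 1)
    (K : Matrix (Fin m) (Fin n) ℝ) (hK : K = Rᵀ * X⁻¹) :
    (X - 1).PosSemidef ∧ X.PosDef ∧ IsUnit X.det ∧
      (X - ((A + B * K) * X * (A + B * K)ᵀ + ∑ i, Ai i * X * (Ai i)ᵀ + 1)).PosSemidef := by
  set V0 : Matrix (Fin n ⊕ Fin m) (Fin n ⊕ Fin m) ℝ := fromBlocks X R Rᵀ U with hV0def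
  have hV0 : V0.PosSemidef := by
    rw [← posSemidef_submatrix_equiv finSumFinEquiv.symm, ← vcat_hcat_eq]
    exact hV
  -- X is PSD
  have hX : X.PosSemidef := by
    have h := hV0.submatrix Sum.inl
    have h2 : V0.submatrix (Sum.inl : Fin n → Fin n ⊕ Fin m) Sum.inl = X := by
      ext i j; rfl
    rwa [h2] at h
  -- the sum term is PSD
  have hS : (∑ i, Ai i * X * (Ai i)ᵀ).PosSemidef := by
    refine Finset.sum_induction _ (fun N : Matrix (Fin n) (Fin n) ℝ => N.PosSemidef)
      (fun a b ha hb => ha.add hb) Matrix.PosSemidef.zero (fun i _ => ?_)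
    have := hX.mul_mul_conjTranspose_same (Ai i)
    rwa [conjTranspose_eq_transpose_of_trivial] at this
  -- rewrite the main equation in block form
  have hC : hcat A B * vcat (hcat X R) (hcat Rᵀ U) * (hcat A B)ᵀ
      = fromCols A B * V0 * (fromCols A B)ᵀ := by
    rw [hcat_eq, vcat_hcat_eq, transpose_submatrix, ← hV0def,
      submatrix_mul_equiv (fromCols A B) V0 id finSumFinEquiv.symm _,
      submatrix_mul_equiv (fromCols A B * V0) (fromCols A B)ᵀ id finSumFinEquiv.symm id,
      submatrix_id_id]
  have hCV : fromCols A B * V0 * (fromCols A B)ᵀ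
      = A * X * Aᵀ + B * Rᵀ * Aᵀ + A * R * Bᵀ + B * U * Bᵀ := by
    rw [hV0def, fromCols_mul_fromBlocks, transpose_fromCols, fromCols_mul_fromRows,
      Matrix.add_mul, Matrix.add_mul]
    abel
  have key : X = A * X * Aᵀ + B * Rᵀ * Aᵀ + A * R * Bᵀ + B * U * Bᵀ
      + ∑ i, Ai i * X * (Ai i)ᵀ + 1 := by
    conv_lhs => rw [heq, hC, hCV]
  -- the quadratic form term is PSD
  have hQ : (fromCols A B * V0 * (fromCols A B)ᵀ).PosSemidef := by
    have := hV0.mul_mul_conjTranspose_same (fromCols A B)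
    rwa [conjTranspose_eq_transpose_of_trivial] at this
  -- X - 1 is PSD
  have hXm1 : (X - 1).PosSemidef := by
    have : X - 1 = fromCols A B * V0 * (fromCols A B)ᵀ + ∑ i, Ai i * X * (Ai i)ᵀ := by
      nth_rewrite 1 [heq]
      rw [hC, add_sub_cancel_right]
    rw [this]
    exact hQ.add hS
  -- X is positive definite
  have hXpd : X.PosDef := by
    have : X = 1 + (X - 1) := by abel
    rw [this]
    exact Matrix.PosDef.add_posSemidef Matrix.PosDef.one hXm1
  have hdet : IsUnit X.det := (Matrix.isUnit_iff_isUnit_det X).mp hXpd.isUnit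
  refine ⟨hXm1, hXpd, hdet, ?_⟩
  -- symmetry facts
  have hXt : Xᵀ = X := by
    have := hX.isHermitian
    rwa [IsHermitian, conjTranspose_eq_transpose_of_trivial] at this
  have hXinv : X * X⁻¹ = 1 := Matrix.mul_nonsing_inv X hdet
  have hinvX : X⁻¹ * X = 1 := Matrix.nonsing_inv_mul X hdet
  have hKX : K * X = Rᵀ := by rw [hK, Matrix.mul_assoc, hinvX, Matrix.mul_one]
  have hKt : Kᵀ = X⁻¹ * R := by
    rw [hK, transpose_mul, transpose_nonsing_inv, hXt, transpose_transpose]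
  have hXKt : X * Kᵀ = R := by rw [hKt, ← Matrix.mul_assoc, hXinv, Matrix.one_mul]
  have hKXKt : K * X * Kᵀ = Rᵀ * X⁻¹ * R := by rw [hKX, hKt, Matrix.mul_assoc]
  -- Schur complement is PSD
  have : Invertible X := hXpd.isUnit.invertible
  have hSchur : (U - Rᵀ * X⁻¹ * R).PosSemidef := by
    have h := (Matrix.PosDef.fromBlocks₁₁ R U hXpd).mp
      (by rwa [conjTranspose_eq_transpose_of_trivial, ← hV0def])
    rwa [conjTranspose_eq_transpose_of_trivial] at h
  -- expand the closed-loop quadratic form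
  have e1 : (A + B * K) * X * (A + B * K)ᵀ
      = A * X * Aᵀ + A * (X * Kᵀ) * Bᵀ + B * (K * X) * Aᵀ + B * (K * X * Kᵀ) * Bᵀ := by
    rw [transpose_add, transpose_mul]
    simp only [Matrix.add_mul, Matrix.mul_add, Matrix.mul_assoc]
    abel
  have e2 : (A + B * K) * X * (A + B * K)ᵀ
      = A * X * Aᵀ + A * R * Bᵀ + B * Rᵀ * Aᵀ + B * (Rᵀ * X⁻¹ * R) * Bᵀ := by
    rw [e1, hKXKt, hXKt, hKX]
  have e3 : X - ((A + B * K) * X * (A + B * K)ᵀ + ∑ i, Ai i * X * (Ai i)ᵀ + 1)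
      = B * (U - Rᵀ * X⁻¹ * R) * Bᵀ := by
    rw [e2]
    nth_rewrite 1 [key]
    rw [Matrix.mul_sub, Matrix.sub_mul]
    abel
  rw [e3]
  have := hSchur.mul_mul_conjTranspose_same B
  rwa [conjTranspose_eq_transpose_of_trivial] at this
end
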